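/- Let g, b > 0 and R₀ > 1, and set c = g R₀²/b. If x* ∈ (0,1) satisfies 1 - g x*/(b(1-x*)) - e^{-c x*} = 0, then the stability condition -(g + b(1 - e^{-c x*})) + b c (1-x*) e^{-c x*} < 0 is equivalent to h(x*) < 0, where h(x) = x² - (1 + b/(b+g)) x + (b/(b+g))(1 - 1/R₀²). -/
import Mathlib


/-- At an endemic equilibrium x*, Brauer's linearized stability criterion is equivalent
to h(x*) < 0 for the quadratic h. -/
theorem stability_criterion_equiv (g b R₀ : ℝ) (hg : 0 < g) (hb : 0 < b) (hR : 1 < R₀)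
    (c : ℝ) (hc : c = g * R₀ ^ 2 / b)
    (x : ℝ) (hx : x ∈ Set.Ioo (0 : ℝ) 1)
    (heq : 1 - g * x / (b * (1 - x)) - Real.exp (-c * x) = 0)
    (h : ℝ → ℝ)
    (hh : ∀ y, h y = y ^ 2 - (1 + b / (b + g)) * y + (b / (b + g)) * (1 - 1 / R₀ ^ 2)) :
    (-(g + b * (1 - Real.exp (-c * x))) + b * c * (1 - x) * Real.exp (-c * x) < 0)
      ↔ h x < 0 := by
  obtain ⟨hx0, hx1⟩ := hx
  have h1x : 0 < 1 - x := by linarith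
  have hbg : 0 < b + g := by linarith
  have hR0 : 0 < R₀ := by linarith
  have hE : Real.exp (-c * x) = 1 - g * x / (b * (1 - x)) := by linarith
  rw [hE, hh x, hc]
  have hK : 0 < g * R₀ ^ 2 * (b + g) / (b * (1 - x)) := by positivity
  have key : (-(g + b * (1 - (1 - g * x / (b * (1 - x))))) +
      b * (g * R₀ ^ 2 / b) * (1 - x) * (1 - g * x / (b * (1 - x)))) =
      (g * R₀ ^ 2 * (b + g) / (b * (1 - x))) *
        (x ^ 2 - (1 + b / (b + g)) * x + (b / (b + g)) * (1 - 1 / R₀ ^ 2)) := by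
    field_simp
    ring
  rw [key]
  constructor
  · intro hlt
    nlinarith
  · intro hlt
    nlinarith
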